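/- Let n ≥ 1, T > 0 and m ∈ ℕ with m ≥ max(3, T log m). Under n-dimensional Wiener measure on C([0,T]; ℝⁿ), let A_{T,m} be the event that max_{0 ≤ k ≤ m−1} |x(kT/m) + x((k+1)T/m) − 2x((k+1/2)T/m)| > √((T/m) log m). Then the complement satisfies W^n_T(A_{T,m}^c) ≤ exp(−n/√(2π)). -/

import Mathlib

open MeasureTheory ProbabilityTheory Set
open Real NNReal

lemma exp_cosh_aux {a b : ℝ} (ha : 0 ≤ a) (hb7 : 7 * b ≤ a) (hba : 98 * b ≤ 25 * a ^ 2) :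
    rexp b ≤ Real.cosh a := by
  rcases le_or_gt a (6/5) with hle | hgt
  · -- small case
    have hb : b ≤ 25 * a ^ 2 / 98 := by linarith
    have hb1 : b < 1 := by nlinarith
    have hcosh : 1 + a ^ 2 / 2 ≤ Real.cosh a := by
      have h2 : Real.cosh a = 1 + 2 * Real.sinh (a / 2) ^ 2 := by
        have h3 : Real.cosh a = Real.cosh (2 * (a / 2)) := by ring_nf
        rw [h3, Real.cosh_two_mul (a / 2), Real.cosh_sq (a / 2)]; ring
      have hs : a / 2 ≤ Real.sinh (a / 2) := Real.self_le_sinh_iff.2 (by linarith)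
      nlinarith [sq_nonneg (Real.sinh (a/2) - a/2)]
    have hexp : rexp b ≤ 1 / (1 - b) := by
      have h1 : 1 - b ≤ rexp (-b) := by have := Real.add_one_le_exp (-b); linarith
      have h2 : (1 - b) * rexp b ≤ 1 := by
        calc (1 - b) * rexp b ≤ rexp (-b) * rexp b :=
              mul_le_mul_of_nonneg_right h1 (Real.exp_nonneg b)
          _ = 1 := by rw [← Real.exp_add]; simp
      rw [le_div_iff₀ (by linarith)]; linarith
    calc rexp b ≤ 1 / (1 - b) := hexp
      _ ≤ 1 + a ^ 2 / 2 := by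
          rw [div_le_iff₀ (by linarith)]
          nlinarith [sq_nonneg a]
      _ ≤ Real.cosh a := hcosh
  · -- large case
    have h1 : rexp b ≤ rexp (a / 7) := Real.exp_le_exp.2 (by linarith)
    have h2 : rexp (a / 7) * 2 ≤ rexp a := by
      have hlog : Real.log 2 ≤ 6 * a / 7 := by
        have := Real.log_two_lt_d9
        nlinarith
      have h3 : (2:ℝ) = rexp (Real.log 2) := (Real.exp_log (by norm_num)).symm
      calc rexp (a/7) * 2 = rexp (a/7) * rexp (Real.log 2) := by rw [← h3]
        _ = rexp (a/7 + Real.log 2) := (Real.exp_add _ _).symm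
        _ ≤ rexp a := Real.exp_le_exp.2 (by linarith)
    have hc : Real.cosh a = (rexp a + rexp (-a)) / 2 := Real.cosh_eq a
    have := Real.exp_nonneg (-a)
    calc rexp b ≤ rexp (a/7) := h1
      _ ≤ rexp a / 2 := by linarith
      _ ≤ Real.cosh a := by rw [hc]; linarith

lemma exp_midpoint {v x₀ u : ℝ} (hv : 0 < v) (hu : 0 ≤ u) (h7 : 7 * u ≤ 2 * x₀)
    (h49 : 49 * v ≤ 25 * x₀ ^ 2) :
    2 * rexp (-x₀ ^ 2 / (2 * v)) ≤
      rexp (-(x₀ + u) ^ 2 / (2 * v)) + rexp (-(x₀ - u) ^ 2 / (2 * v)) := by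
  set a := x₀ * u / v with hadef
  set b := u ^ 2 / (2 * v) with hbdef
  have hx₀ : 0 ≤ x₀ := by nlinarith
  have ha : 0 ≤ a := by positivity
  have hb7 : 7 * b ≤ a := by
    have h1 : a - 7 * b = (2 * x₀ * u - 7 * u ^ 2) / (2 * v) := by
      rw [hadef, hbdef]; field_simp
    have h2 : (0:ℝ) ≤ (2 * x₀ * u - 7 * u ^ 2) / (2 * v) :=
      div_nonneg (by nlinarith) (by positivity)
    linarith
  have hba : 98 * b ≤ 25 * a ^ 2 := by
    have h1 : 25 * a ^ 2 - 98 * b = u ^ 2 * (25 * x₀ ^ 2 - 49 * v) / v ^ 2 := by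
      rw [hadef, hbdef]; field_simp; ring
    have h2 : (0:ℝ) ≤ u ^ 2 * (25 * x₀ ^ 2 - 49 * v) / v ^ 2 :=
      div_nonneg (mul_nonneg (sq_nonneg u) (by linarith)) (by positivity)
    linarith
  have hco := exp_cosh_aux ha hb7 hba
  have h2 : 2 * rexp b ≤ rexp a + rexp (-a) := by
    have := Real.cosh_eq a; linarith
  have h3 : 2 ≤ rexp (-a - b) + rexp (a - b) := by
    have h4 := mul_le_mul_of_nonneg_right h2 (Real.exp_nonneg (-b))
    have e1 : rexp b * rexp (-b) = 1 := by rw [← Real.exp_add]; simp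
    have e2 : rexp a * rexp (-b) = rexp (a - b) := by rw [← Real.exp_add]; ring_nf
    have e3 : rexp (-a) * rexp (-b) = rexp (-a - b) := by rw [← Real.exp_add]; ring_nf
    nlinarith
  have e1 : -(x₀ + u) ^ 2 / (2 * v) = -x₀ ^ 2 / (2 * v) + (-a - b) := by
    rw [hadef, hbdef]; field_simp; ring
  have e2 : -(x₀ - u) ^ 2 / (2 * v) = -x₀ ^ 2 / (2 * v) + (a - b) := by
    rw [hadef, hbdef]; field_simp; ring
  rw [e1, e2, Real.exp_add, Real.exp_add]
  have hE := Real.exp_nonneg (-x₀ ^ 2 / (2 * v))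
  nlinarith

lemma continuous_pdf (μ : ℝ) (v : ℝ≥0) : Continuous (gaussianPDFReal μ v) := by
  unfold gaussianPDFReal
  fun_prop

lemma integral_pdf_ge {v : ℝ≥0} (hv : 0 < (v:ℝ)) {x₀ h : ℝ} (hh : 0 ≤ h)
    (h7 : 7 * h ≤ 2 * x₀) (h49 : 49 * (v:ℝ) ≤ 25 * x₀ ^ 2) :
    2 * h * gaussianPDFReal 0 v x₀ ≤ ∫ x in (x₀ - h)..(x₀ + h), gaussianPDFReal 0 v x := by
  have hcont : Continuous (gaussianPDFReal 0 v) := continuous_pdf 0 v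
  have key : ∫ x in (x₀ - h)..(x₀ + h), gaussianPDFReal 0 v x
      = ∫ u in (-h)..h, gaussianPDFReal 0 v (x₀ + u) := by
    rw [intervalIntegral.integral_comp_add_left (gaussianPDFReal 0 v) x₀]
    norm_num [sub_eq_add_neg]
  rw [key]
  have hsplit : ∫ u in (-h)..h, gaussianPDFReal 0 v (x₀ + u)
      = (∫ u in (-h)..(0:ℝ), gaussianPDFReal 0 v (x₀ + u))
        + ∫ u in (0:ℝ)..h, gaussianPDFReal 0 v (x₀ + u) := by
    rw [intervalIntegral.integral_add_adjacent_intervals] <;>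
      exact (hcont.comp (continuous_const.add continuous_id)).intervalIntegrable _ _
  have hneg : ∫ u in (-h)..(0:ℝ), gaussianPDFReal 0 v (x₀ + u)
      = ∫ u in (0:ℝ)..h, gaussianPDFReal 0 v (x₀ - u) := by
    have h0 := intervalIntegral.integral_comp_neg (fun u => gaussianPDFReal 0 v (x₀ + u))
      (a := 0) (b := h)
    simp only [neg_zero, ← sub_eq_add_neg] at h0
    exact h0.symm
  have i1 : IntervalIntegrable (fun u : ℝ => gaussianPDFReal 0 v (x₀ - u)) volume 0 h :=
    ((hcont.comp (continuous_const.sub continuous_id)).intervalIntegrable _ _)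
  have i2 : IntervalIntegrable (fun u : ℝ => gaussianPDFReal 0 v (x₀ + u)) volume 0 h :=
    ((hcont.comp (continuous_const.add continuous_id)).intervalIntegrable _ _)
  rw [hsplit, hneg, ← intervalIntegral.integral_add i1 i2]
  have hmono : ∀ u ∈ Set.Icc (0:ℝ) h,
      2 * gaussianPDFReal 0 v x₀ ≤
        gaussianPDFReal 0 v (x₀ - u) + gaussianPDFReal 0 v (x₀ + u) := by
    intro u hu
    unfold gaussianPDFReal
    have hK : (0:ℝ) ≤ (√(2 * π * v))⁻¹ := by positivity
    have := exp_midpoint (v := (v:ℝ)) (x₀ := x₀) (u := u) hv hu.1 (by linarith [hu.2]) h49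
    simp only [sub_zero]
    nlinarith [this]
  calc 2 * h * gaussianPDFReal 0 v x₀ = ∫ _ in (0:ℝ)..h, 2 * gaussianPDFReal 0 v x₀ := by
        simp; ring
    _ ≤ ∫ u in (0:ℝ)..h, (gaussianPDFReal 0 v (x₀ - u) + gaussianPDFReal 0 v (x₀ + u)) := by
        apply intervalIntegral.integral_mono_on hh
        · exact intervalIntegrable_const
        · exact i1.add i2
        · exact hmono

lemma gaussianPDFReal_mul_eq {v : ℝ≥0} (hv : v ≠ 0) (x y : ℝ) :
    gaussianPDFReal 0 v x * gaussianPDFReal x v y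
      = gaussianPDFReal 0 (2 * v) y * gaussianPDFReal (y / 2) (v / 2) x := by
  have hvpos : 0 < (v : ℝ) := by positivity
  unfold gaussianPDFReal
  push_cast
  rw [mul_mul_mul_comm, mul_mul_mul_comm ((√(2 * π * (2 * (v:ℝ))))⁻¹)]
  rw [← mul_inv, ← mul_inv, ← Real.exp_add, ← Real.exp_add]
  have hK : √(2 * π * (2 * (v:ℝ))) * √(2 * π * ((v:ℝ) / 2)) = √(2 * π * (v:ℝ)) * √(2 * π * (v:ℝ)) := by
    rw [← Real.sqrt_mul (by positivity), ← Real.sqrt_mul (by positivity)]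
    congr 1
    ring
  rw [hK]
  congr 1
  field_simp
  ring

lemma gaussian_sub_apply {Ω : Type*} [MeasurableSpace Ω] {P : Measure Ω} [IsProbabilityMeasure P]
    {A B : Ω → ℝ} (hA : Measurable A) (hB : Measurable B) {v : ℝ≥0} (hv : v ≠ 0)
    (hAB : IndepFun A B P) (hlA : P.map A = gaussianReal 0 v) (hlB : P.map B = gaussianReal 0 v)
    {s : Set ℝ} (hs : MeasurableSet s) :
    P {ω | A ω - B ω ∈ s} = gaussianReal 0 (2 * v) s := by
  have h2v : (2 * v : ℝ≥0) ≠ 0 := by simp [hv]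
  have hv2 : (v / 2 : ℝ≥0) ≠ 0 := by simp [hv]
  have hprod : P.map (fun ω => (A ω, B ω)) = (gaussianReal 0 v).prod (gaussianReal 0 v) := by
    have h := (indepFun_iff_map_prod_eq_prod_map_map hA.aemeasurable hB.aemeasurable).1 hAB
    rw [hlA, hlB] at h
    exact h
  have hsub : Measurable fun p : ℝ × ℝ => p.1 - p.2 := measurable_fst.sub measurable_snd
  have h1 : (P.map (fun ω => (A ω, B ω))) ((fun p : ℝ × ℝ => p.1 - p.2) ⁻¹' s)
      = P {ω | A ω - B ω ∈ s} := by
    rw [Measure.map_apply (hA.prodMk hB) (hsub hs)]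
    rfl
  rw [← h1, hprod, Measure.prod_apply (hsub hs)]
  have hjoint : Measurable fun p : ℝ × ℝ => gaussianPDF p.1 v p.2 := by
    unfold gaussianPDF gaussianPDFReal
    exact ENNReal.measurable_ofReal.comp (by fun_prop)
  have h3 : ∀ x : ℝ, gaussianReal 0 v (Prod.mk x ⁻¹' ((fun p : ℝ × ℝ => p.1 - p.2) ⁻¹' s))
      = ∫⁻ y in s, gaussianPDF x v y := by
    intro x
    have h2 : (Prod.mk x ⁻¹' ((fun p : ℝ × ℝ => p.1 - p.2) ⁻¹' s)) = (fun y => x + (-1) * y) ⁻¹' s := by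
      ext y; simp [sub_eq_add_neg]
    have hone : (NNReal.mk ((-1:ℝ)^2) (sq_nonneg _)) = 1 := by ext; norm_num
    have m1 : (gaussianReal 0 v).map (((-1 : ℝ)) * ·) = gaussianReal 0 v := by
      rw [gaussianReal_map_const_mul, hone, one_mul, mul_zero]
    have hmap : (gaussianReal 0 v).map (fun y => x + (-1) * y) = gaussianReal x v := by
      have hco : (fun y : ℝ => x + (-1) * y) = ((x + ·) ∘ (((-1 : ℝ)) * ·)) := rfl
      rw [hco, ← Measure.map_map (measurable_const_add x) (measurable_const_mul _), m1,
        gaussianReal_map_const_add, zero_add]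
    rw [h2, ← gaussianReal_apply _ hv s, ← hmap, Measure.map_apply (by fun_prop) hs]
  simp_rw [h3]
  have hinner_meas : Measurable fun x : ℝ => ∫⁻ y in s, gaussianPDF x v y :=
    Measurable.lintegral_prod_right hjoint
  rw [gaussianReal_of_var_ne_zero 0 hv,
    lintegral_withDensity_eq_lintegral_mul _ (measurable_gaussianPDF 0 v) hinner_meas]
  simp only [Pi.mul_apply]
  have h4 : ∀ x : ℝ, gaussianPDF 0 v x * ∫⁻ y in s, gaussianPDF x v y
      = ∫⁻ y in s, gaussianPDF 0 v x * gaussianPDF x v y := by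
    intro x
    rw [← lintegral_const_mul' (gaussianPDF 0 v x) _ (by unfold gaussianPDF; exact ENNReal.ofReal_ne_top)]
  simp_rw [h4]
  rw [lintegral_lintegral_swap]
  · have h5 : ∀ y : ℝ, ∫⁻ x, gaussianPDF 0 v x * gaussianPDF x v y
        = gaussianPDF 0 (2 * v) y := by
      intro y
      have hpt : ∀ x : ℝ, gaussianPDF 0 v x * gaussianPDF x v y
          = gaussianPDF 0 (2 * v) y * gaussianPDF (y / 2) (v / 2) x := by
        intro x
        unfold gaussianPDF
        rw [← ENNReal.ofReal_mul (gaussianPDFReal_nonneg _ _ _),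
          gaussianPDFReal_mul_eq hv x y,
          ENNReal.ofReal_mul (gaussianPDFReal_nonneg _ _ _)]
      simp_rw [hpt]
      rw [lintegral_const_mul' (gaussianPDF 0 (2 * v) y) _
        (by unfold gaussianPDF; exact ENNReal.ofReal_ne_top),
        lintegral_gaussianPDF_eq_one _ hv2, mul_one]
    simp_rw [h5]
    exact (gaussianReal_apply _ h2v s).symm
  · exact (((measurable_gaussianPDF 0 v).comp measurable_fst).mul hjoint).aemeasurable

lemma meas_iInter_pairs {Ω : Type*} [MeasurableSpace Ω] {P : Measure Ω} [IsProbabilityMeasure P]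
    {ι ι' : Type*} [DecidableEq ι] {X : ι → Ω → ℝ}
    (hX : iIndepFun X P) (hXm : ∀ i, Measurable (X i))
    (e o : ι' → ι)
    (hdisj : ∀ q q' : ι', q ≠ q' → e q ≠ e q' ∧ e q ≠ o q' ∧ o q ≠ e q' ∧ o q ≠ o q')
    {s : ι' → Set ℝ} (hs : ∀ q, MeasurableSet (s q)) (S : Finset ι') :
    P (⋂ q ∈ S, {ω | X (o q) ω - X (e q) ω ∈ s q})
      = ∏ q ∈ S, P {ω | X (o q) ω - X (e q) ω ∈ s q} := by
  classical
  induction S using Finset.induction_on with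
  | empty => simp
  | @insert a S ha ih =>
    -- T₁ : the pair of indices of a ; T₂ : union of pairs over S
    set T₁ : Finset ι := {e a, o a} with hT₁
    set T₂ : Finset ι := S.biUnion (fun q => {e q, o q}) with hT₂
    have hea : e a ∈ T₁ := by simp [hT₁]
    have hoa : o a ∈ T₁ := by simp [hT₁]
    have hmem : ∀ q ∈ S, e q ∈ T₂ ∧ o q ∈ T₂ := by
      intro q hq
      constructor <;> { rw [hT₂, Finset.mem_biUnion]; exact ⟨q, hq, by simp⟩ }
    have hST : Disjoint T₁ T₂ := by
      rw [Finset.disjoint_left]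
      intro i hi1 hi2
      rw [hT₂, Finset.mem_biUnion] at hi2
      obtain ⟨q, hq, hiq⟩ := hi2
      have hne : a ≠ q := by rintro rfl; exact ha hq
      obtain ⟨h1, h2, h3, h4⟩ := hdisj a q hne
      rw [hT₁] at hi1
      simp only [Finset.mem_insert, Finset.mem_singleton] at hi1 hiq
      rcases hi1 with rfl | rfl <;> rcases hiq with h | h <;> simp_all
    have hIF := hX.indepFun_finset T₁ T₂ hST hXm
    -- compose with measurable maps
    let φ : ((i : T₁) → ℝ) → ℝ := fun v => v ⟨o a, hoa⟩ - v ⟨e a, hea⟩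
    have hφ : Measurable φ := (measurable_pi_apply _).sub (measurable_pi_apply _)
    let B : Set ((i : T₂) → ℝ) :=
      ⋂ (q : {x // x ∈ S}),
        {v | v ⟨o q.1, (hmem q.1 q.2).2⟩ - v ⟨e q.1, (hmem q.1 q.2).1⟩ ∈ s q.1}
    have hB : MeasurableSet B := by
      apply MeasurableSet.iInter
      intro q
      exact ((measurable_pi_apply (⟨o q.1, (hmem q.1 q.2).2⟩ : T₂)).sub
        (measurable_pi_apply (⟨e q.1, (hmem q.1 q.2).1⟩ : T₂))) (hs q.1)
    have hkey := (hIF.comp hφ measurable_id).measure_inter_preimage_eq_mul (s a) B (hs a) hB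
    have hpre1 : (φ ∘ fun ω (i : T₁) => X i ω) ⁻¹' (s a) = {ω | X (o a) ω - X (e a) ω ∈ s a} := rfl
    have hpre2 : (id ∘ fun ω (i : T₂) => X i ω) ⁻¹' B
        = ⋂ q ∈ S, {ω | X (o q) ω - X (e q) ω ∈ s q} := by
      ext ω
      simp only [Set.mem_preimage, Set.mem_iInter, B, Function.comp_apply, id_eq,
        Set.mem_setOf_eq, Subtype.forall]
    rw [Finset.set_biInter_insert, Finset.prod_insert ha, ← ih, ← hpre2, ← hpre1, hkey,
      hpre1, hpre2]

lemma gauss_Icc_toReal_le {v : ℝ≥0} (hv : v ≠ 0) {L : ℝ} (hL : 1 ≤ L) :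
    (gaussianReal 0 v (Icc (-(Real.sqrt (v * L))) (Real.sqrt (v * L)))).toReal
      ≤ 1 - 8 / 5 * Real.sqrt L * rexp (-(49 / 50) * L) / Real.sqrt (2 * π) := by
  have hvpos : 0 < (v : ℝ) := by positivity
  set c : ℝ := Real.sqrt (v * L) with hcdef
  have hc0 : 0 < c := Real.sqrt_pos.2 (by nlinarith)
  have hc2 : c ^ 2 = v * L := Real.sq_sqrt (by nlinarith)
  set x₀ : ℝ := 7 * c / 5 with hx₀def
  set h : ℝ := 2 * c / 5 with hhdef
  have hx1 : x₀ - h = c := by rw [hx₀def, hhdef]; ring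
  have hx2 : x₀ + h = 9 * c / 5 := by rw [hx₀def, hhdef]; ring
  have hI := integral_pdf_ge (v := v) (x₀ := x₀) (h := h) hvpos (by positivity)
    (by rw [hx₀def, hhdef]; linarith)
    (by rw [hx₀def]; nlinarith)
  rw [hx1, hx2] at hI
  set I : ℝ := ∫ x in c..(9 * c / 5), gaussianPDFReal 0 v x with hIdef
  have hpdf0 : 0 < gaussianPDFReal 0 v x₀ := gaussianPDFReal_pos _ _ _ hv
  have hInn : 0 ≤ I := le_trans (by positivity) hI
  -- the two tail intervals
  have hIoo1 : gaussianReal 0 v (Ioo c (9 * c / 5)) = ENNReal.ofReal I := by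
    rw [gaussianReal_apply_eq_integral 0 hv]
    congr 1
    rw [hIdef, intervalIntegral.integral_of_le (by linarith), integral_Ioc_eq_integral_Ioo]
  have heven : ∀ x : ℝ, gaussianPDFReal 0 v (-x) = gaussianPDFReal 0 v x := by
    intro x; simp [gaussianPDFReal, neg_sq]
  have hIoo2 : gaussianReal 0 v (Ioo (-(9 * c / 5)) (-c)) = ENNReal.ofReal I := by
    rw [gaussianReal_apply_eq_integral 0 hv]
    congr 1
    have h0 := intervalIntegral.integral_comp_neg (gaussianPDFReal 0 v) (a := c) (b := 9 * c / 5)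
    simp_rw [heven] at h0
    rw [hIdef, h0, intervalIntegral.integral_of_le (by linarith), integral_Ioc_eq_integral_Ioo]
  -- disjointness and union bound
  have hd12 : Disjoint (Ioo c (9 * c / 5)) (Ioo (-(9 * c / 5)) (-c)) := by
    rw [Set.disjoint_left]; rintro x ⟨h1, _⟩ ⟨_, h4⟩; linarith
  have hdI1 : Disjoint (Icc (-c) c) (Ioo c (9 * c / 5) ∪ Ioo (-(9 * c / 5)) (-c)) := by
    rw [Set.disjoint_left]; rintro x ⟨ha, hb⟩ (⟨h1, _⟩ | ⟨_, h4⟩) <;> linarith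
  have hsum : gaussianReal 0 v (Icc (-c) c) + (ENNReal.ofReal I + ENNReal.ofReal I) ≤ 1 := by
    have hU : gaussianReal 0 v (Ioo c (9 * c / 5) ∪ Ioo (-(9 * c / 5)) (-c))
        = ENNReal.ofReal I + ENNReal.ofReal I := by
      rw [measure_union hd12 measurableSet_Ioo, hIoo1, hIoo2]
    calc gaussianReal 0 v (Icc (-c) c) + (ENNReal.ofReal I + ENNReal.ofReal I)
        = gaussianReal 0 v (Icc (-c) c ∪ (Ioo c (9 * c / 5) ∪ Ioo (-(9 * c / 5)) (-c))) := by
          rw [measure_union hdI1 (measurableSet_Ioo.union measurableSet_Ioo), hU]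
      _ ≤ 1 := prob_le_one
  have htoReal : (gaussianReal 0 v (Icc (-c) c)).toReal + (I + I) ≤ 1 := by
    have h1 := ENNReal.toReal_mono (by simp) hsum
    rwa [ENNReal.toReal_add (measure_ne_top _ _) (by simp), ENNReal.toReal_add
      ENNReal.ofReal_ne_top ENNReal.ofReal_ne_top, ENNReal.toReal_one,
      ENNReal.toReal_ofReal hInn] at h1
  -- compute the lower bound for 2I
  have hpdfval : gaussianPDFReal 0 v x₀ = (√(2 * π * v))⁻¹ * rexp (-(49 / 50) * L) := by
    unfold gaussianPDFReal
    congr 2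
    have h1 : x₀ ^ 2 = 49 / 25 * c ^ 2 := by rw [hx₀def]; ring
    rw [hc2] at h1
    rw [sub_zero, h1]
    field_simp
    ring
  have hsq2 : Real.sqrt (2 * π * (v : ℝ)) = Real.sqrt (2 * π) * Real.sqrt v := by
    rw [← Real.sqrt_mul (by positivity)]
  have hsqv : (0:ℝ) < Real.sqrt v := Real.sqrt_pos.2 hvpos
  have hsqpi : (0:ℝ) < Real.sqrt (2 * π) := Real.sqrt_pos.2 (by positivity)
  have hcval : c = Real.sqrt v * Real.sqrt L := by
    rw [hcdef, Real.sqrt_mul (by positivity)]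
  have hIlow : 4 / 5 * Real.sqrt L * rexp (-(49 / 50) * L) / Real.sqrt (2 * π) ≤ I := by
    refine le_trans (le_of_eq ?_) hI
    rw [hpdfval, hsq2, hhdef, hcval]
    field_simp
    ring
  have hdouble : 8 / 5 * Real.sqrt L * rexp (-(49 / 50) * L) / Real.sqrt (2 * π)
      = 2 * (4 / 5 * Real.sqrt L * rexp (-(49 / 50) * L) / Real.sqrt (2 * π)) := by ring
  linarith

lemma gauss_Icc_le_final {v : ℝ≥0} (hv : v ≠ 0) {m : ℕ} (hm3 : 3 ≤ m) :
    (gaussianReal 0 v (Icc (-(Real.sqrt (v * Real.log m))) (Real.sqrt (v * Real.log m)))).toReal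
      ≤ 1 - 1 / (m * Real.sqrt (2 * π)) := by
  have hm0 : (0:ℝ) < m := by positivity
  have hm3' : (3:ℝ) ≤ m := by exact_mod_cast hm3
  have hL : 1 ≤ Real.log m := by
    rw [Real.le_log_iff_exp_le hm0]
    have := Real.exp_one_lt_d9
    linarith
  refine le_trans (gauss_Icc_toReal_le hv hL) ?_
  have hsqpi : (0:ℝ) < Real.sqrt (2 * π) := Real.sqrt_pos.2 (by positivity)
  have hkey : 1 / ((m:ℝ) * Real.sqrt (2 * π))
      ≤ 8 / 5 * Real.sqrt (Real.log m) * rexp (-(49 / 50) * Real.log m) / Real.sqrt (2 * π) := by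
    have hinv : 1 / (m:ℝ) = rexp (-Real.log m) := by
      rw [Real.exp_neg, Real.exp_log hm0, one_div]
    have hsplit : rexp (-Real.log m) ≤ 8 / 5 * Real.sqrt (Real.log m)
        * rexp (-(49 / 50) * Real.log m) := by
      have h1 : rexp (-Real.log m) ≤ rexp (-(49 / 50) * Real.log m) :=
        Real.exp_le_exp.2 (by nlinarith)
      have h2 : (1:ℝ) ≤ Real.sqrt (Real.log m) := by
        rw [show (1:ℝ) = Real.sqrt 1 by simp]
        exact Real.sqrt_le_sqrt hL
      nlinarith [Real.exp_pos (-(49/50) * Real.log m)]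
    calc 1 / ((m:ℝ) * Real.sqrt (2 * π)) = rexp (-Real.log m) / Real.sqrt (2 * π) := by
          rw [← hinv]; field_simp
      _ ≤ 8 / 5 * Real.sqrt (Real.log m) * rexp (-(49 / 50) * Real.log m) / Real.sqrt (2 * π) := by
          apply div_le_div_of_nonneg_right hsplit hsqpi.le
  linarith

/-- An `n`-dimensional standard Brownian motion: continuous paths started at `0`, with
coordinatewise Gaussian increments `W t i - W s i ∼ N(0, t - s)`, the increments over
disjoint time intervals and distinct coordinates being jointly independent. -/
def IsBrownianMotion {Ω : Type*} [MeasurableSpace Ω] (n : ℕ) (P : Measure Ω)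
    (W : ℝ → Ω → EuclideanSpace ℝ (Fin n)) : Prop :=
  (∀ ω, Continuous fun t => W t ω) ∧ (∀ ω, W 0 ω = 0) ∧ (∀ t, Measurable (W t)) ∧
  (∀ (i : Fin n) (s t : ℝ), 0 ≤ s → s ≤ t →
    P.map (fun ω => W t ω i - W s ω i) = gaussianReal 0 (Real.toNNReal (t - s))) ∧
  (∀ (m : ℕ) (u : ℕ → ℝ), Monotone u → 0 ≤ u 0 →
    iIndepFun
      (fun (q : Fin n × Fin m) ω => W (u (q.2 + 1)) ω q.1 - W (u q.2) ω q.1) P)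

/-- Under `n`-dimensional Wiener measure, the probability that all midpoint deviations
`x(kT/m) + x((k+1)T/m) - 2 x((k+½)T/m)`, `k = 0, …, m-1`, are at most `√((T/m) log m)`
is bounded by `exp(-n/√(2π))`, provided `m ≥ max(3, T log m)`. -/
theorem wiener_midpoint_deviation_bound {Ω : Type*} [MeasurableSpace Ω]
    (n : ℕ) (hn : 1 ≤ n) (P : Measure Ω) [IsProbabilityMeasure P]
    (W : ℝ → Ω → EuclideanSpace ℝ (Fin n)) (hW : IsBrownianMotion n P W)
    (T : ℝ) (hT : 0 < T) (m : ℕ) (hm3 : 3 ≤ m) (hmT : T * Real.log m ≤ m) :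
    (P {ω | ∀ k : Fin m,
        ‖W ((k : ℝ) * T / m) ω + W (((k : ℝ) + 1) * T / m) ω
            - (2 : ℝ) • W ((((k : ℝ)) + 1 / 2) * T / m) ω‖ ≤
          Real.sqrt (T / m * Real.log m)}).toReal ≤
      Real.exp (-(n : ℝ) / Real.sqrt (2 * Real.pi)) := by
  classical
  obtain ⟨hWc, hW0, hWmeas, hWlaw, hWindep⟩ := hW
  have hm0 : (0:ℝ) < m := by positivity
  have hmne : (m:ℝ) ≠ 0 := hm0.ne'
  set u : ℕ → ℝ := fun j => j * (T / (2 * m)) with hu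
  have hupos : 0 < T / (2 * m) := by positivity
  have hum : Monotone u := fun a b hab =>
    mul_le_mul_of_nonneg_right (Nat.cast_le.2 hab) hupos.le
  have hind := hWindep (2 * m) u hum (by simp [hu])
  set X : Fin n × Fin (2 * m) → Ω → ℝ :=
    fun q ω => W (u (q.2 + 1)) ω q.1 - W (u q.2) ω q.1 with hX
  have hXm : ∀ q, Measurable (X q) := by
    intro q
    exact ((measurable_pi_apply q.1).comp ((WithLp.measurable_ofLp _ _).comp (hWmeas _))).sub
      ((measurable_pi_apply q.1).comp ((WithLp.measurable_ofLp _ _).comp (hWmeas _)))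
  have hunonneg : ∀ j : ℕ, 0 ≤ u j := fun j => by positivity
  set v2 : ℝ≥0 := (T / (2 * m)).toNNReal with hv2
  have hv2ne : v2 ≠ 0 := by
    rw [hv2, ne_eq, Real.toNNReal_eq_zero, not_le]
    exact hupos
  have hXlaw : ∀ q, P.map (X q) = gaussianReal 0 v2 := by
    intro q
    have h := hWlaw q.1 (u q.2) (u (q.2 + 1)) (hunonneg _) (hum (Nat.le_succ _))
    rw [hX]
    rw [h]
    congr 1
    rw [hv2]
    congr 1
    rw [hu]
    push_cast
    ring
  -- index maps
  set ee : Fin n × Fin m → Fin n × Fin (2 * m) :=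
    fun q => (q.1, ⟨2 * q.2.val, by omega⟩) with hee
  set oo : Fin n × Fin m → Fin n × Fin (2 * m) :=
    fun q => (q.1, ⟨2 * q.2.val + 1, by have := q.2.isLt; omega⟩) with hoo
  have hdisj : ∀ q q' : Fin n × Fin m, q ≠ q' →
      ee q ≠ ee q' ∧ ee q ≠ oo q' ∧ oo q ≠ ee q' ∧ oo q ≠ oo q' := by
    intro q q' hne
    refine ⟨?_, ?_, ?_, ?_⟩ <;>
    · intro hcontra
      have h1 := congrArg Prod.fst hcontra
      have h2 := congrArg (fun p : Fin n × Fin (2 * m) => (p.2 : ℕ)) hcontra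
      simp only [hee, hoo] at h1 h2
      exact hne (Prod.ext h1 (Fin.ext (by omega)))
  set c : ℝ := Real.sqrt (T / m * Real.log m) with hc
  set s : Set ℝ := Icc (-c) c with hs
  have hprod := meas_iInter_pairs hind hXm ee oo hdisj
    (s := fun _ => s) (fun _ => measurableSet_Icc) Finset.univ
  -- time identities
  have htime1 : ∀ k : Fin m, u (2 * k.val) = (k : ℝ) * T / m := by
    intro k; rw [hu]; push_cast; field_simp
  have htime2 : ∀ k : Fin m, u (2 * k.val + 1) = ((k : ℝ) + 1 / 2) * T / m := by
    intro k; rw [hu]; push_cast; field_simp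
  have htime3 : ∀ k : Fin m, u (2 * k.val + 1 + 1) = ((k : ℝ) + 1) * T / m := by
    intro k; rw [hu]; push_cast; field_simp; ring
  have hcoord : ∀ (q : Fin n × Fin m) (ω : Ω), X (oo q) ω - X (ee q) ω
      = (W ((q.2 : ℝ) * T / m) ω + W (((q.2 : ℝ) + 1) * T / m) ω
          - (2 : ℝ) • W (((q.2 : ℝ) + 1 / 2) * T / m) ω) q.1 := by
    intro q ω
    have hv1 : ((oo q).2 : ℕ) = 2 * q.2.val + 1 := rfl
    have hv2' : ((ee q).2 : ℕ) = 2 * q.2.val := rfl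
    rw [hX]
    simp only [hv1, hv2', htime1 q.2, htime2 q.2, htime3 q.2]
    have hfst : (oo q).1 = q.1 := rfl
    have hfst2 : (ee q).1 = q.1 := rfl
    rw [hfst, hfst2]
    simp only [PiLp.add_apply, PiLp.sub_apply, PiLp.smul_apply, smul_eq_mul]
    ring
  have hmemle : ∀ (x : EuclideanSpace ℝ (Fin n)) (i : Fin n), |x i| ≤ ‖x‖ := by
    intro x i
    rw [EuclideanSpace.norm_eq, ← Real.sqrt_sq_eq_abs]
    apply Real.sqrt_le_sqrt
    have h1 := Finset.single_le_sum (f := fun j => ‖x j‖ ^ 2)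
      (fun j _ => sq_nonneg _) (Finset.mem_univ i)
    simpa [Real.norm_eq_abs, sq_abs] using h1
  have hEsub : {ω | ∀ k : Fin m,
        ‖W ((k : ℝ) * T / m) ω + W (((k : ℝ) + 1) * T / m) ω
            - (2 : ℝ) • W ((((k : ℝ)) + 1 / 2) * T / m) ω‖ ≤ c}
      ⊆ ⋂ q ∈ (Finset.univ : Finset (Fin n × Fin m)),
          {ω | X (oo q) ω - X (ee q) ω ∈ s} := by
    intro ω hω
    simp only [Set.mem_iInter, Set.mem_setOf_eq]
    intro q _
    rw [hcoord q ω, hs, Set.mem_Icc, ← abs_le]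
    exact le_trans (hmemle _ q.1) (hω q.2)
  have hfac : ∀ q : Fin n × Fin m,
      P {ω | X (oo q) ω - X (ee q) ω ∈ s} = gaussianReal 0 (2 * v2) s := by
    intro q
    have hne : oo q ≠ ee q := by
      intro hco
      have h2 := congrArg (fun p : Fin n × Fin (2 * m) => (p.2 : ℕ)) hco
      simp only [hee, hoo] at h2
      omega
    exact gaussian_sub_apply (hXm _) (hXm _) hv2ne (hind.indepFun hne) (hXlaw _) (hXlaw _)
      measurableSet_Icc
  have hPle : P {ω | ∀ k : Fin m,
        ‖W ((k : ℝ) * T / m) ω + W (((k : ℝ) + 1) * T / m) ω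
            - (2 : ℝ) • W ((((k : ℝ)) + 1 / 2) * T / m) ω‖ ≤ c}
      ≤ (gaussianReal 0 (2 * v2) s) ^ (n * m) := by
    calc P {ω | ∀ k : Fin m,
        ‖W ((k : ℝ) * T / m) ω + W (((k : ℝ) + 1) * T / m) ω
            - (2 : ℝ) • W ((((k : ℝ)) + 1 / 2) * T / m) ω‖ ≤ c}
        ≤ P (⋂ q ∈ (Finset.univ : Finset (Fin n × Fin m)),
            {ω | X (oo q) ω - X (ee q) ω ∈ s}) := measure_mono hEsub
      _ = ∏ q : Fin n × Fin m, P {ω | X (oo q) ω - X (ee q) ω ∈ s} := hprod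
      _ = ∏ _q : Fin n × Fin m, gaussianReal 0 (2 * v2) s :=
          Finset.prod_congr rfl (fun q _ => hfac q)
      _ = (gaussianReal 0 (2 * v2) s) ^ (n * m) := by
          rw [Finset.prod_const, Finset.card_univ, Fintype.card_prod,
            Fintype.card_fin, Fintype.card_fin]
  -- variance identification and single-factor bound
  have h2v2 : (2 * v2 : ℝ≥0) = (T / (m : ℝ)).toNNReal := by
    have hco : ((2 * v2 : ℝ≥0) : ℝ) = (((T / (m : ℝ)).toNNReal : ℝ≥0) : ℝ) := by
      push_cast [hv2]
      rw [Real.coe_toNNReal _ hupos.le, Real.coe_toNNReal _ (by positivity : (0:ℝ) ≤ T / m)]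
      field_simp
    exact_mod_cast hco
  have hvm : (T / (m : ℝ)).toNNReal ≠ 0 := by
    rw [ne_eq, Real.toNNReal_eq_zero, not_le]
    positivity
  have hIccBound : (gaussianReal 0 (2 * v2) s).toReal ≤ 1 - 1 / (m * Real.sqrt (2 * π)) := by
    have hcoe : (((T / (m : ℝ)).toNNReal : ℝ≥0) : ℝ) = T / m :=
      Real.coe_toNNReal _ (by positivity)
    have hceq : c = Real.sqrt ((((T / (m : ℝ)).toNNReal : ℝ≥0) : ℝ) * Real.log m) := by
      rw [hc, hcoe]
    rw [h2v2, hs, hceq]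
    exact gauss_Icc_le_final hvm hm3
  -- final numeric chain
  set δ : ℝ := 1 / ((m : ℝ) * Real.sqrt (2 * π)) with hδ
  have hsqpi : (0:ℝ) < Real.sqrt (2 * π) := Real.sqrt_pos.2 (by positivity)
  have hδ0 : 0 < δ := by rw [hδ]; positivity
  have hpi1 : (1:ℝ) ≤ Real.sqrt (2 * π) := by
    rw [show (1:ℝ) = Real.sqrt 1 by simp]
    apply Real.sqrt_le_sqrt
    nlinarith [Real.pi_gt_three]
  have hδ1 : δ ≤ 1 := by
    rw [hδ, div_le_one (by positivity)]
    have hm1 : (1:ℝ) ≤ m := by exact_mod_cast le_trans (by norm_num) hm3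
    nlinarith
  have hr0 : (0:ℝ) ≤ (gaussianReal 0 (2 * v2) s).toReal := ENNReal.toReal_nonneg
  have htop : (gaussianReal 0 (2 * v2) s) ^ (n * m) ≠ ⊤ := ENNReal.pow_ne_top (measure_ne_top _ _)
  calc (P {ω | ∀ k : Fin m,
        ‖W ((k : ℝ) * T / m) ω + W (((k : ℝ) + 1) * T / m) ω
            - (2 : ℝ) • W ((((k : ℝ)) + 1 / 2) * T / m) ω‖ ≤ c}).toReal
      ≤ ((gaussianReal 0 (2 * v2) s) ^ (n * m)).toReal := ENNReal.toReal_mono htop hPle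
    _ = (gaussianReal 0 (2 * v2) s).toReal ^ (n * m) := ENNReal.toReal_pow _ _
    _ ≤ (1 - δ) ^ (n * m) := pow_le_pow_left₀ hr0 (by rw [hδ]; exact hIccBound) _
    _ ≤ rexp (-δ) ^ (n * m) := by
        apply pow_le_pow_left₀ (by linarith)
        have := Real.add_one_le_exp (-δ)
        linarith
    _ = rexp (((n * m : ℕ) : ℝ) * (-δ)) := (Real.exp_nat_mul _ _).symm
    _ ≤ rexp (-(n : ℝ) / Real.sqrt (2 * π)) := by
        apply Real.exp_le_exp.2
        apply le_of_eq
        rw [hδ]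
        push_cast
        field_simp
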